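/- arXiv:1703.04749 — 6 statements merged into one kernel-verified Lean document; each statement's English description precedes it below -/
import Mathlib

section
/- Let X be a real Banach space. Then the following are equivalent: (1) X has the strong diameter two property, i.e. every convex combination of slices of the closed unit ball B_X has diameter two; (2) for every convex combination of slices C of B_X and every ε > 0 there exists x ∈ C with ‖x‖ > 1 − ε. -/
open Metric Set

/-- A slice of the closed unit ball of `X`: the set of points of the ball where a
norm-one functional `f` is larger than `1 - α`, for some `α > 0`. -/
def IsSlice {X : Type*} [NormedAddCommGroup X] [NormedSpace ℝ X] (S : Set X) : Prop :=
  ∃ (f : X →L[ℝ] ℝ) (α : ℝ), ‖f‖ = 1 ∧ 0 < α ∧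
    S = {x : X | ‖x‖ ≤ 1 ∧ 1 - α < f x}

/-- A convex combination of slices of the closed unit ball of `X`. -/
def IsCCS {X : Type*} [NormedAddCommGroup X] [NormedSpace ℝ X] (C : Set X) : Prop :=
  ∃ (n : ℕ) (lam : Fin n → ℝ) (S : Fin n → Set X),
    0 < n ∧ (∀ i, 0 ≤ lam i ∧ lam i ≤ 1) ∧ (∑ i, lam i) = 1 ∧
    (∀ i, IsSlice (S i)) ∧
    C = {z : X | ∃ x : Fin n → X, (∀ i, x i ∈ S i) ∧ z = ∑ i, lam i • x i}

lemma ccs_norm_le_one {X : Type*} [NormedAddCommGroup X] [NormedSpace ℝ X]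
    {C : Set X} (h : IsCCS C) : ∀ z ∈ C, ‖z‖ ≤ 1 := by
  obtain ⟨n, lam, S, hn, hlam, hsum, hS, rfl⟩ := h
  rintro z ⟨x, hx, rfl⟩
  calc ‖∑ i, lam i • x i‖ ≤ ∑ i, ‖lam i • x i‖ := norm_sum_le _ _
    _ ≤ ∑ i, lam i := by
        apply Finset.sum_le_sum; intro i _
        rw [norm_smul, Real.norm_of_nonneg (hlam i).1]
        obtain ⟨f, α, hf, hα, hSi⟩ := hS i
        have hxi := hx i
        rw [hSi] at hxi
        calc lam i * ‖x i‖ ≤ lam i * 1 :=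
              mul_le_mul_of_nonneg_left hxi.1 (hlam i).1
          _ = lam i := mul_one _
    _ = 1 := hsum

theorem sd2p_iff_norm_almost_one
    {X : Type*} [NormedAddCommGroup X] [NormedSpace ℝ X] [CompleteSpace X] :
    (∀ C : Set X, IsCCS C → Metric.diam C = 2) ↔
      (∀ C : Set X, IsCCS C → ∀ ε : ℝ, 0 < ε → ∃ x ∈ C, 1 - ε < ‖x‖) := by
  constructor
  · intro h C hC ε hε
    set ε' := min ε 1 with hε'def
    have hε'pos : 0 < ε' := lt_min hε one_pos
    have hε'le : ε' ≤ ε := min_le_left _ _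
    have hε'le1 : ε' ≤ 1 := min_le_right _ _
    have hdiam := h C hC
    by_contra hcon
    push_neg at hcon
    have hall : ∀ x ∈ C, ∀ y ∈ C, dist x y ≤ 2 - 2*ε' := by
      intro x hx y hy
      have h1 : ‖x‖ ≤ 1 - ε := hcon x hx
      have h2 : ‖y‖ ≤ 1 - ε := hcon y hy
      calc dist x y ≤ ‖x‖ + ‖y‖ := dist_le_norm_add_norm x y
        _ ≤ 2 - 2*ε' := by linarith
    have := diam_le_of_forall_dist_le (by linarith) hall
    linarith
  · intro h C hC
    have hle1 := ccs_norm_le_one hC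
    obtain ⟨n, lam, S, hn, hlam, hsum, hS, hCeq⟩ := hC
    choose f α hf hα hSeq using hS
    have hU : (Finset.univ : Finset (Fin n)).Nonempty := ⟨⟨0, hn⟩, Finset.mem_univ _⟩
    set β := min 1 (Finset.univ.inf' hU α) with hβdef
    have hβpos : 0 < β :=
      lt_min one_pos ((Finset.lt_inf'_iff hU).2 fun i _ => hα i)
    have hβle : ∀ i, β ≤ α i := fun i =>
      (min_le_right _ _).trans (Finset.inf'_le _ (Finset.mem_univ i))
    set T : Fin n → Set X := fun i => {x : X | ‖x‖ ≤ 1 ∧ 1 - β < f i x} with hT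
    set T' : Fin n → Set X := fun i => {x : X | ‖x‖ ≤ 1 ∧ 1 - β < (-(f i)) x} with hT'
    set lam' : Fin (n+n) → ℝ :=
      Fin.addCases (fun i => lam i / 2) (fun i => lam i / 2) with hlam'
    set S' : Fin (n+n) → Set X := Fin.addCases T T' with hS'
    set D : Set X :=
      {z : X | ∃ x : Fin (n+n) → X, (∀ i, x i ∈ S' i) ∧ z = ∑ i, lam' i • x i} with hD
    have hDccs : IsCCS D := by
      refine ⟨n+n, lam', S', by omega, ?_, ?_, ?_, rfl⟩
      · intro i
        refine Fin.addCases (fun j => ?_) (fun j => ?_) i <;>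
          simp only [hlam', Fin.addCases_left, Fin.addCases_right] <;>
          exact ⟨by linarith [(hlam j).1], by linarith [(hlam j).2]⟩
      · rw [Fin.sum_univ_add]
        simp only [hlam', Fin.addCases_left, Fin.addCases_right, ← Finset.sum_div]
        rw [hsum]; norm_num
      · intro i
        refine Fin.addCases (fun j => ?_) (fun j => ?_) i <;>
          simp only [hS', Fin.addCases_left, Fin.addCases_right]
        · exact ⟨f j, β, hf j, hβpos, rfl⟩
        · exact ⟨-(f j), β, by simp [hf j], hβpos, rfl⟩
    have key : ∀ ε : ℝ, 0 < ε → ∃ u ∈ C, ∃ w ∈ C, 2 - ε < ‖u - w‖ := by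
      intro ε hε
      obtain ⟨z, hz, hnz⟩ := h D hDccs (ε/2) (by linarith)
      obtain ⟨x, hx, rfl⟩ := hz
      set a : Fin n → X := fun i => x (Fin.castAdd n i) with ha'
      set b : Fin n → X := fun i => x (Fin.natAdd n i) with hb'
      have ha : ∀ i, a i ∈ S i := by
        intro i
        have := hx (Fin.castAdd n i)
        simp only [hS', Fin.addCases_left, hT, mem_setOf_eq] at this
        rw [hSeq i]
        exact ⟨this.1, lt_of_le_of_lt (by linarith [hβle i]) this.2⟩
      have hb : ∀ i, -(b i) ∈ S i := by
        intro i
        have := hx (Fin.natAdd n i)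
        simp only [hS', Fin.addCases_right, hT', mem_setOf_eq,
          ContinuousLinearMap.neg_apply] at this
        rw [hSeq i]
        refine ⟨by rw [norm_neg]; exact this.1, ?_⟩
        rw [map_neg]
        exact lt_of_le_of_lt (by linarith [hβle i]) this.2
      refine ⟨∑ i, lam i • a i, hCeq ▸ ⟨a, ha, rfl⟩,
        ∑ i, lam i • (-(b i)), hCeq ▸ ⟨fun i => -(b i), hb, rfl⟩, ?_⟩
      have hu2 : ∑ i : Fin n, (lam i / 2) • a i = (1/2:ℝ) • ∑ i, lam i • a i := by
        rw [Finset.smul_sum]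
        refine Finset.sum_congr rfl fun i _ => ?_
        rw [smul_smul]; congr 1; ring
      have hv2 : ∑ i : Fin n, (lam i / 2) • b i = (1/2:ℝ) • ∑ i, lam i • b i := by
        rw [Finset.smul_sum]
        refine Finset.sum_congr rfl fun i _ => ?_
        rw [smul_smul]; congr 1; ring
      have hz2 : ∑ i : Fin (n+n), lam' i • x i =
          (1/2 : ℝ) • ((∑ i, lam i • a i) - ∑ i, lam i • (-(b i))) := by
        rw [Fin.sum_univ_add]
        simp only [hlam', Fin.addCases_left, Fin.addCases_right]
        rw [hu2, hv2, ← smul_add]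
        congr 1
        simp [smul_neg, sub_eq_add_neg, Finset.sum_neg_distrib]
      rw [hz2, norm_smul, Real.norm_of_nonneg (by norm_num : (0:ℝ) ≤ 1/2)] at hnz
      linarith
    have hbdd : Bornology.IsBounded C :=
      (isBounded_closedBall (x := (0:X)) (r := 1)).subset
        (fun z hz => by simpa [mem_closedBall, dist_zero_right] using hle1 z hz)
    refine le_antisymm ?_ ?_
    · refine diam_le_of_forall_dist_le (by norm_num) fun x hx y hy => ?_
      calc dist x y ≤ ‖x‖ + ‖y‖ := dist_le_norm_add_norm x y
        _ ≤ 2 := by linarith [hle1 x hx, hle1 y hy]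
    · refine le_of_forall_sub_le fun ε hε => ?_
      obtain ⟨u, hu, w, hw, huw⟩ := key ε hε
      calc 2 - ε ≤ ‖u - w‖ := le_of_lt huw
        _ = dist u w := (dist_eq_norm u w).symm
        _ ≤ diam C := dist_le_diam_of_mem hbdd hu hw
end

section
/- Let X be a real Banach space. If for every convex combination of slices C of the closed unit ball B_X and every ε > 0 there exists x ∈ C with ‖x‖ > 1 − ε, then every convex combination of slices of B_X has diameter two, i.e. X has the strong diameter two property. -/
open Metric Set

theorem sd2p_of_norm_almost_one
    {X : Type*} [NormedAddCommGroup X] [NormedSpace ℝ X] [CompleteSpace X]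
    (h : ∀ C : Set X, IsCCS C → ∀ ε : ℝ, 0 < ε → ∃ x ∈ C, 1 - ε < ‖x‖) :
    ∀ C : Set X, IsCCS C → Metric.diam C = 2 := by
  intro C hC
  obtain ⟨n, lam, S, hn, hlam, hsum, hslice, hCeq⟩ := hC
  choose f α hf hα hSeq using hslice
  -- every element of C has norm at most 1
  have hCnorm : ∀ z ∈ C, ‖z‖ ≤ 1 := by
    intro z hz
    rw [hCeq] at hz
    obtain ⟨x, hx, rfl⟩ := hz
    calc ‖∑ i, lam i • x i‖ ≤ ∑ i, ‖lam i • x i‖ := norm_sum_le _ _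
      _ ≤ ∑ i, lam i := by
          apply Finset.sum_le_sum
          intro i _
          rw [norm_smul, Real.norm_eq_abs, abs_of_nonneg (hlam i).1]
          have hxi : ‖x i‖ ≤ 1 := by
            have := hx i; rw [hSeq i] at this; exact this.1
          nlinarith [(hlam i).1]
      _ = 1 := hsum
  have hCb : Bornology.IsBounded C := by
    apply (Metric.isBounded_closedBall (x := (0 : X)) (r := 1)).subset
    intro z hz
    rw [Metric.mem_closedBall, dist_zero_right]
    exact hCnorm z hz
  -- key step: find far apart points using the mirrored CCS
  have key : ∀ δ : ℝ, 0 < δ → ∃ x ∈ C, ∃ y ∈ C, 2 - 2 * δ < dist x y := by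
    intro δ hδ
    set lam' : Fin (n + n) → ℝ :=
      Fin.addCases (fun i => lam i / 2) (fun i => lam i / 2) with hlam'
    set S' : Fin (n + n) → Set X :=
      Fin.addCases S (fun i => {x : X | ‖x‖ ≤ 1 ∧ 1 - α i < (-(f i)) x}) with hS'
    set D : Set X :=
      {z : X | ∃ x : Fin (n + n) → X, (∀ i, x i ∈ S' i) ∧ z = ∑ i, lam' i • x i} with hD
    have hDccs : IsCCS D := by
      refine ⟨n + n, lam', S', by omega, ?_, ?_, ?_, rfl⟩
      · intro j
        refine Fin.addCases ?_ ?_ j <;> intro i <;>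
          simp only [hlam', Fin.addCases_left, Fin.addCases_right] <;>
          constructor <;> linarith [(hlam i).1, (hlam i).2]
      · rw [Fin.sum_univ_add]
        simp only [hlam', Fin.addCases_left, Fin.addCases_right]
        rw [← Finset.sum_add_distrib]
        simp only [← add_div, add_self_div_two]  -- maybe
        exact hsum
      · intro j
        refine Fin.addCases ?_ ?_ j <;> intro i <;>
          simp only [hS', Fin.addCases_left, Fin.addCases_right]
        · exact ⟨f i, α i, hf i, hα i, hSeq i⟩
        · exact ⟨-(f i), α i, by rw [norm_neg]; exact hf i, hα i, rfl⟩
    obtain ⟨u, hu, hunorm⟩ := h D hDccs δ hδ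
    obtain ⟨w, hw, hueq⟩ := hu
    set xx : Fin n → X := fun i => w (Fin.castAdd n i) with hxxdef
    set yy : Fin n → X := fun i => -(w (Fin.natAdd n i)) with hyydef
    have hxx : ∀ i, xx i ∈ S i := by
      intro i
      have := hw (Fin.castAdd n i)
      simpa only [hS', Fin.addCases_left] using this
    have hyy : ∀ i, yy i ∈ S i := by
      intro i
      have := hw (Fin.natAdd n i)
      simp only [hS', Fin.addCases_right, mem_setOf_eq, ContinuousLinearMap.neg_apply] at this
      rw [hSeq i]
      refine ⟨by simpa [hyydef] using this.1, ?_⟩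
      simpa [hyydef] using this.2
    refine ⟨∑ i, lam i • xx i, ?_, ∑ i, lam i • yy i, ?_, ?_⟩
    · rw [hCeq]; exact ⟨xx, hxx, rfl⟩
    · rw [hCeq]; exact ⟨yy, hyy, rfl⟩
    · have hxy : (∑ i, lam i • xx i) - (∑ i, lam i • yy i) = (2 : ℝ) • u := by
        rw [hueq, Finset.smul_sum, Fin.sum_univ_add]
        simp only [hlam', Fin.addCases_left, Fin.addCases_right, smul_smul]
        have h1 : ∀ i : Fin n, (2 : ℝ) * (lam i / 2) = lam i := fun i => by ring
        simp only [h1]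
        rw [← Finset.sum_sub_distrib, ← Finset.sum_add_distrib]
        apply Finset.sum_congr rfl
        intro i _
        simp [hxxdef, hyydef, sub_eq_add_neg]
      rw [dist_eq_norm, hxy, norm_smul]
      simp only [Real.norm_ofNat]
      linarith
  -- conclude
  refine le_antisymm ?_ ?_
  · apply Metric.diam_le_of_forall_dist_le (by norm_num)
    intro x hx y hy
    calc dist x y ≤ ‖x‖ + ‖y‖ := dist_le_norm_add_norm x y
      _ ≤ 2 := by linarith [hCnorm x hx, hCnorm y hy]
  · by_contra hlt
    push_neg at hlt
    obtain ⟨x, hx, y, hy, hxy⟩ := key ((2 - Metric.diam C) / 4)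
      (by have := Metric.diam_nonneg (s := C); linarith)
    have := Metric.dist_le_diam_of_mem hCb hx hy
    linarith
end

section
/- Let X be a strictly convex real Banach space with X ≠ {0}. Then there exists a convex combination of slices of the closed unit ball B_X which contains no point of the unit sphere S_X. -/
open Metric Set

theorem exists_ccs_missing_sphere_of_strictConvex
    {X : Type*} [NormedAddCommGroup X] [NormedSpace ℝ X] [CompleteSpace X]
    [StrictConvexSpace ℝ X] [Nontrivial X] :
    ∃ C : Set X, IsCCS C ∧ C ∩ sphere (0 : X) 1 = ∅ := by
  obtain ⟨x₀, hx₀⟩ := exists_ne (0 : X)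
  obtain ⟨f, hf, -⟩ := exists_dual_vector ℝ x₀ (norm_ne_zero_iff.mpr hx₀)
  set S : Fin 2 → Set X := ![{x : X | ‖x‖ ≤ 1 ∧ 1 - (1/2 : ℝ) < f x},
    {x : X | ‖x‖ ≤ 1 ∧ 1 - (1/2 : ℝ) < (-f) x}] with hS
  refine ⟨{z : X | ∃ x : Fin 2 → X, (∀ i, x i ∈ S i) ∧ z = ∑ i, (1/2 : ℝ) • x i},
    ⟨2, fun _ => 1/2, S, by norm_num, by norm_num, by simp, ?_, rfl⟩, ?_⟩
  · intro i
    fin_cases i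
    · exact ⟨f, 1/2, hf, by norm_num, rfl⟩
    · exact ⟨-f, 1/2, by simpa using hf, by norm_num, rfl⟩
  · ext z
    simp only [mem_inter_iff, mem_setOf_eq, mem_sphere_iff_norm, sub_zero, mem_empty_iff_false,
      iff_false, not_and]
    rintro ⟨x, hx, rfl⟩ hnorm
    have h0 := hx 0
    have h1 := hx 1
    simp only [hS, Matrix.cons_val_zero, Matrix.cons_val_one, Matrix.head_cons,
      mem_setOf_eq, ContinuousLinearMap.neg_apply] at h0 h1
    have hsum : ∑ i, (1/2 : ℝ) • x i = (1/2 : ℝ) • (x 0 + x 1) := by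
      rw [Fin.sum_univ_two, smul_add]
    rw [hsum] at hnorm
    have hne : ‖x 0 + x 1‖ = 2 := by
      have := hnorm
      rw [norm_smul] at this
      simp at this
      linarith
    have hle : ‖x 0 + x 1‖ ≤ ‖x 0‖ + ‖x 1‖ := norm_add_le _ _
    have h00 : ‖x 0‖ = 1 := le_antisymm h0.1 (by nlinarith [h1.1])
    have h11 : ‖x 1‖ = 1 := le_antisymm h1.1 (by nlinarith [h0.1])
    have : x 0 = x 1 := eq_of_norm_eq_of_norm_add_eq (by rw [h00, h11])
      (by rw [hne, h00, h11]; norm_num)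
    rw [this] at h0
    linarith [h0.2, h1.2]
end

section
/- Let X be a real Banach space. Then the following are equivalent: (1) every convex combination of slices of the closed unit ball B_X intersects the unit sphere S_X; (2) for every convex combination of slices C of B_X there exist x, y ∈ C with ‖x − y‖ = 2. -/
open Metric Set

lemma ccs_norm_le {X : Type*} [NormedAddCommGroup X] [NormedSpace ℝ X]
    {C : Set X} (hC : IsCCS C) {z : X} (hz : z ∈ C) : ‖z‖ ≤ 1 := by
  obtain ⟨n, lam, S, hn, hlam, hsum, hslice, rfl⟩ := hC
  obtain ⟨x, hx, rfl⟩ := hz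
  calc ‖∑ i, lam i • x i‖ ≤ ∑ i, ‖lam i • x i‖ := norm_sum_le _ _
    _ ≤ ∑ i, lam i := by
        refine Finset.sum_le_sum fun i _ => ?_
        rw [norm_smul, Real.norm_eq_abs, abs_of_nonneg (hlam i).1]
        have hxi : ‖x i‖ ≤ 1 := by
          obtain ⟨f, α, hf, hα, hS⟩ := hslice i
          have := hx i; rw [hS] at this; exact this.1
        nlinarith [(hlam i).1]
    _ = 1 := hsum

theorem ccs_meets_sphere_iff_diam_attained
    {X : Type*} [NormedAddCommGroup X] [NormedSpace ℝ X] [CompleteSpace X] :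
    (∀ C : Set X, IsCCS C → (C ∩ sphere (0 : X) 1).Nonempty) ↔
      (∀ C : Set X, IsCCS C → ∃ x ∈ C, ∃ y ∈ C, ‖x - y‖ = 2) := by
  constructor
  · intro h C hC
    obtain ⟨n, lam, S, hn, hlam, hsum, hslice, hCeq⟩ := hC
    choose f α hf hα hSeq using hslice
    set lam' : Fin (n + n) → ℝ := Fin.addCases (fun i => lam i / 2) (fun i => lam i / 2)
      with hlam'
    set S' : Fin (n + n) → Set X :=
      Fin.addCases (fun i => {x : X | ‖x‖ ≤ 1 ∧ 1 - α i < f i x})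
        (fun i => {x : X | ‖x‖ ≤ 1 ∧ 1 - α i < (-(f i)) x}) with hS'
    have hD : IsCCS {z : X | ∃ x : Fin (n + n) → X,
        (∀ i, x i ∈ S' i) ∧ z = ∑ i, lam' i • x i} := by
      refine ⟨n + n, lam', S', by omega, ?_, ?_, ?_, rfl⟩
      · intro i
        refine Fin.addCases ?_ ?_ i <;> intro j <;>
          simp only [hlam', Fin.addCases_left, Fin.addCases_right] <;>
          constructor <;> linarith [(hlam j).1, (hlam j).2]
      · rw [Fin.sum_univ_add]
        simp only [hlam', Fin.addCases_left, Fin.addCases_right]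
        rw [← Finset.sum_div, hsum]; norm_num
      · intro i
        refine Fin.addCases ?_ ?_ i <;> intro j
        · exact ⟨f j, α j, hf j, hα j, by simp only [hS', Fin.addCases_left]⟩
        · exact ⟨-(f j), α j, by rw [norm_neg]; exact hf j, hα j,
            by simp only [hS', Fin.addCases_right]⟩
    obtain ⟨z, ⟨x, hx, hzeq⟩, hzs⟩ := h _ hD
    rw [mem_sphere_zero_iff_norm] at hzs
    set u : X := ∑ i, lam i • x (Fin.castAdd n i) with hu
    set w : X := ∑ i, lam i • (-(x (Fin.natAdd n i))) with hw
    have huC : u ∈ C := by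
      rw [hCeq]
      refine ⟨fun i => x (Fin.castAdd n i), fun i => ?_, rfl⟩
      have := hx (Fin.castAdd n i)
      simp only [hS', Fin.addCases_left] at this
      rw [hSeq i]; exact this
    have hwC : w ∈ C := by
      rw [hCeq]
      refine ⟨fun i => -(x (Fin.natAdd n i)), fun i => ?_, rfl⟩
      have := hx (Fin.natAdd n i)
      simp only [hS', Fin.addCases_right, ContinuousLinearMap.neg_apply] at this
      rw [hSeq i]
      exact ⟨by rw [norm_neg]; exact this.1, by rw [map_neg]; exact this.2⟩
    have hz2 : z = (1/2 : ℝ) • (u - w) := by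
      rw [hzeq, Fin.sum_univ_add]
      simp only [hlam', Fin.addCases_left, Fin.addCases_right, hu, hw, smul_sub,
        Finset.smul_sum, smul_smul, smul_neg, sub_neg_eq_add, Finset.sum_neg_distrib]
      rw [smul_add, Finset.smul_sum, Finset.smul_sum]
      congr 1 <;> exact Finset.sum_congr rfl fun i _ => by
        rw [smul_smul]; congr 1; ring
    refine ⟨u, huC, w, hwC, ?_⟩
    have : ‖z‖ = (1/2) * ‖u - w‖ := by
      rw [hz2, norm_smul]; norm_num
    linarith [hzs ▸ this]
  · intro h C hC
    obtain ⟨x, hx, y, hy, hxy⟩ := h C hC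
    have hxn : ‖x‖ ≤ 1 := ccs_norm_le hC hx
    have hyn : ‖y‖ ≤ 1 := ccs_norm_le hC hy
    have h2 : ‖x - y‖ ≤ ‖x‖ + ‖y‖ := norm_sub_le _ _
    refine ⟨x, hx, ?_⟩
    rw [mem_sphere_zero_iff_norm]
    linarith
end

section
/- Let X be a real Banach space such that every convex combination of slices of the closed unit ball B_X intersects the unit sphere S_X. Then for every convex combination of slices C of B_X there exist x, y ∈ C with ‖x − y‖ = 2 (that is, every convex combination of slices of B_X has diameter two and the diameter is attained). -/
open Metric Set

theorem diam_attained_of_ccs_meets_sphere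
    {X : Type*} [NormedAddCommGroup X] [NormedSpace ℝ X] [CompleteSpace X]
    (h : ∀ C : Set X, IsCCS C → (C ∩ sphere (0 : X) 1).Nonempty) :
    ∀ C : Set X, IsCCS C → ∃ x ∈ C, ∃ y ∈ C, ‖x - y‖ = 2 := by
  intro C hC
  obtain ⟨n, lam, S, hn, hlam, hsum, hslice, hCeq⟩ := hC
  -- negated slices
  set Sn : Fin n → Set X := fun i => (fun x : X => -x) ⁻¹' S i with hSn
  have hsliceN : ∀ i, IsSlice (Sn i) := by
    intro i
    obtain ⟨f, α, hf, hα, hS⟩ := hslice i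
    refine ⟨-f, α, by simp [hf], hα, ?_⟩
    ext x
    simp [Sn, hS, norm_neg]
  set lam' : Fin (n + n) → ℝ := Fin.addCases (fun i => lam i / 2) (fun i => lam i / 2)
    with hlam'
  set S' : Fin (n + n) → Set X := Fin.addCases S Sn with hS'
  have hCCS : IsCCS {z : X | ∃ x : Fin (n + n) → X,
      (∀ i, x i ∈ S' i) ∧ z = ∑ i, lam' i • x i} := by
    refine ⟨n + n, lam', S', by omega, ?_, ?_, ?_, rfl⟩
    · intro i
      induction i using Fin.addCases with
      | left j =>
        simp only [lam', Fin.addCases_left]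
        obtain ⟨h1, h2⟩ := hlam j
        constructor <;> linarith
      | right j =>
        simp only [lam', Fin.addCases_right]
        obtain ⟨h1, h2⟩ := hlam j
        constructor <;> linarith
    · rw [Fin.sum_univ_add]
      simp only [lam', Fin.addCases_left, Fin.addCases_right]
      rw [← Finset.sum_add_distrib]
      have : ∀ i, lam i / 2 + lam i / 2 = lam i := fun i => by ring
      simp only [this, hsum]
    · intro i
      induction i using Fin.addCases with
      | left j =>
        simp only [S', Fin.addCases_left]
        exact hslice j
      | right j =>
        simp only [S', Fin.addCases_right]
        exact hsliceN j
  obtain ⟨z, ⟨x', hx', hz⟩, hznorm⟩ := h _ hCCS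
  rw [mem_sphere_zero_iff_norm] at hznorm
  set a : Fin n → X := fun i => x' (Fin.castAdd n i) with ha
  set b : Fin n → X := fun i => -x' (Fin.natAdd n i) with hb
  have haS : ∀ i, a i ∈ S i := by
    intro i
    have := hx' (Fin.castAdd n i)
    simp only [S', Fin.addCases_left] at this
    exact this
  have hbS : ∀ i, b i ∈ S i := by
    intro i
    have := hx' (Fin.natAdd n i)
    simp only [S', Fin.addCases_right, Sn, Set.mem_preimage] at this
    exact this
  set x : X := ∑ i, lam i • a i with hx
  set y : X := ∑ i, lam i • b i with hy
  have hxC : x ∈ C := by rw [hCeq]; exact ⟨a, haS, rfl⟩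
  have hyC : y ∈ C := by rw [hCeq]; exact ⟨b, hbS, rfl⟩
  have hzxy : z = (1/2 : ℝ) • x - (1/2 : ℝ) • y := by
    rw [hz, Fin.sum_univ_add]
    simp only [lam', Fin.addCases_left, Fin.addCases_right]
    rw [hx, hy, Finset.smul_sum, Finset.smul_sum, ← Finset.sum_sub_distrib,
      ← Finset.sum_add_distrib]
    refine Finset.sum_congr rfl fun i _ => ?_
    simp only [ha, hb]
    module
  refine ⟨x, hxC, y, hyC, ?_⟩
  have : x - y = (2 : ℝ) • z := by
    rw [hzxy, smul_sub, smul_smul, smul_smul]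
    norm_num
  rw [this, norm_smul, hznorm]
  norm_num
end

section
/- Let X and Y be real Banach spaces such that every convex combination of slices of the closed unit ball B_X intersects the unit sphere S_X and every convex combination of slices of the closed unit ball B_Y intersects the unit sphere S_Y. Let B denote the unit ball {z ∈ X ⊗ Y : ‖z‖_π ≤ 1} of the algebraic tensor product X ⊗ Y equipped with the projective tensor norm. Then for every n ≥ 1, every λ_1, …, λ_n ∈ [0,1] with Σ_{i=1}^n λ_i = 1, every α > 0, and all continuous bilinear forms T_1, …, T_n : X × Y → ℝ of norm one, the set Σ_{i=1}^n λ_i {z ∈ B : T̂_i(z) > 1 − α} (where T̂_i : X ⊗ Y → ℝ is the linear map induced by T_i) contains an element of projective tensor norm equal to 1. -/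
open Metric Set TensorProduct

/-- The projective tensor norm of an element of the algebraic tensor product `X ⊗ Y`:
the infimum of `∑ ‖u i‖ * ‖v i‖` over all finite representations `z = ∑ u i ⊗ v i`. -/
noncomputable def projNorm {X Y : Type*} [NormedAddCommGroup X] [NormedSpace ℝ X]
    [NormedAddCommGroup Y] [NormedSpace ℝ Y] (z : X ⊗[ℝ] Y) : ℝ :=
  sInf {r : ℝ | ∃ (m : ℕ) (u : Fin m → X) (v : Fin m → Y),
    z = ∑ i, u i ⊗ₜ[ℝ] v i ∧ r = ∑ i, ‖u i‖ * ‖v i‖}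

/-- The linear map `X ⊗ Y →ₗ ℝ` induced by a continuous bilinear form
`T : X →L[ℝ] Y →L[ℝ] ℝ`. -/
noncomputable def inducedLinearMap {X Y : Type*} [NormedAddCommGroup X] [NormedSpace ℝ X]
    [NormedAddCommGroup Y] [NormedSpace ℝ Y] (T : X →L[ℝ] Y →L[ℝ] ℝ) :
    X ⊗[ℝ] Y →ₗ[ℝ] ℝ :=
  TensorProduct.lift ((ContinuousLinearMap.coeLM ℝ).comp T.toLinearMap)

section Aux

variable {X Y : Type*} [NormedAddCommGroup X] [NormedSpace ℝ X]
    [NormedAddCommGroup Y] [NormedSpace ℝ Y]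

lemma projSet_bddBelow (z : X ⊗[ℝ] Y) :
    BddBelow {r : ℝ | ∃ (m : ℕ) (u : Fin m → X) (v : Fin m → Y),
      z = ∑ i, u i ⊗ₜ[ℝ] v i ∧ r = ∑ i, ‖u i‖ * ‖v i‖} := by
  refine ⟨0, fun r hr => ?_⟩
  obtain ⟨m, u, v, -, rfl⟩ := hr
  exact Finset.sum_nonneg fun i _ => mul_nonneg (norm_nonneg _) (norm_nonneg _)

lemma projNorm_le {z : X ⊗[ℝ] Y} {m : ℕ} (u : Fin m → X) (v : Fin m → Y)
    (h : z = ∑ i, u i ⊗ₜ[ℝ] v i) : projNorm z ≤ ∑ i, ‖u i‖ * ‖v i‖ :=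
  csInf_le (projSet_bddBelow z) ⟨m, u, v, h, rfl⟩

lemma exists_repr (z : X ⊗[ℝ] Y) : ∃ (m : ℕ) (u : Fin m → X) (v : Fin m → Y),
    z = ∑ i, u i ⊗ₜ[ℝ] v i := by
  induction z using TensorProduct.induction_on with
  | zero => exact ⟨0, ![], ![], by simp⟩
  | tmul x y => exact ⟨1, ![x], ![y], by simp⟩
  | add z1 z2 h1 h2 =>
    obtain ⟨m1, u1, v1, h1⟩ := h1
    obtain ⟨m2, u2, v2, h2⟩ := h2
    refine ⟨m1 + m2, Fin.append u1 u2, Fin.append v1 v2, ?_⟩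
    rw [Fin.sum_univ_add]
    simp [Fin.append_left, Fin.append_right, h1, h2]

lemma inducedLinearMap_tmul (T : X →L[ℝ] Y →L[ℝ] ℝ) (x : X) (y : Y) :
    inducedLinearMap T (x ⊗ₜ[ℝ] y) = T x y := rfl

lemma le_projNorm (T : X →L[ℝ] Y →L[ℝ] ℝ) (h : ∀ u v, T u v ≤ ‖u‖ * ‖v‖)
    (z : X ⊗[ℝ] Y) : inducedLinearMap T z ≤ projNorm z := by
  obtain ⟨m, u, v, hz⟩ := exists_repr z
  refine le_csInf ⟨_, m, u, v, hz, rfl⟩ ?_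
  rintro r ⟨m', u', v', hz', rfl⟩
  rw [hz', map_sum]
  exact Finset.sum_le_sum fun i _ => by rw [inducedLinearMap_tmul]; exact h _ _

end Aux

set_option maxHeartbeats 1000000 in
theorem ccs_of_projective_tensor_ball_contains_norm_one
    {X Y : Type*} [NormedAddCommGroup X] [NormedSpace ℝ X] [CompleteSpace X]
    [NormedAddCommGroup Y] [NormedSpace ℝ Y] [CompleteSpace Y]
    (hX : ∀ C : Set X, IsCCS C → (C ∩ sphere (0 : X) 1).Nonempty)
    (hY : ∀ C : Set Y, IsCCS C → (C ∩ sphere (0 : Y) 1).Nonempty)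
    (n : ℕ) (hn : 0 < n) (lam : Fin n → ℝ) (hlam : ∀ i, 0 ≤ lam i ∧ lam i ≤ 1)
    (hsum : ∑ i, lam i = 1) (α : ℝ) (hα : 0 < α)
    (T : Fin n → (X →L[ℝ] Y →L[ℝ] ℝ)) (hT : ∀ i, ‖T i‖ = 1) :
    ∃ z : Fin n → (X ⊗[ℝ] Y),
      (∀ i, projNorm (z i) ≤ 1 ∧ 1 - α < inducedLinearMap (T i) (z i)) ∧
      projNorm (∑ i, lam i • z i) = 1 := by
  -- choose a small ε
  set ε : ℝ := min α 1 / 3 with hεdef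
  have hεmin : min α 1 = 3 * ε := by rw [hεdef]; ring
  have hε0 : 0 < ε := by
    rw [hεdef]; positivity
  have hε1 : ε < 1 := by
    have h1 : min α 1 ≤ 1 := min_le_right _ _
    linarith [hεmin ▸ h1]
  have hεα : 3 * ε ≤ α := by
    have h1 : min α 1 ≤ α := min_le_left _ _
    linarith [hεmin ▸ h1]
  have hcube : 1 - α ≤ (1 - ε) ^ 3 := by nlinarith [sq_nonneg ε, hε0.le]
  -- pick almost norming pairs for each `T i`
  have habx : ∀ i, ∃ a b, ‖a‖ ≤ 1 ∧ ‖b‖ ≤ 1 ∧ 1 - ε < T i a b := by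
    intro i
    obtain ⟨a, ha, hTa⟩ := (T i).exists_lt_apply_of_lt_opNorm
      (r := 1 - ε) (by rw [hT i]; linarith)
    obtain ⟨b, hb, hTab⟩ := (T i a).exists_lt_apply_of_lt_opNorm hTa
    rw [Real.norm_eq_abs] at hTab
    rcases le_or_gt 0 (T i a b) with h | h
    · exact ⟨a, b, ha.le, hb.le, by rwa [abs_of_nonneg h] at hTab⟩
    · exact ⟨a, -b, ha.le, by simpa using hb.le,
        by rw [map_neg]; rwa [abs_of_neg h] at hTab⟩
  choose a b ha hb hab using habx
  -- the functionals `F i = T i · (b i)` on X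
  set F : Fin n → (X →L[ℝ] ℝ) := fun i => (T i).flip (b i) with hFdef
  have hFapp : ∀ i x, F i x = T i x (b i) := fun i x => rfl
  have hF1 : ∀ i, ‖F i‖ ≤ 1 := by
    intro i
    refine ContinuousLinearMap.opNorm_le_bound _ zero_le_one fun x => ?_
    rw [one_mul, hFapp]
    have h1 := (T i).le_opNorm₂ x (b i)
    rw [hT i, one_mul] at h1
    nlinarith [hb i, norm_nonneg x, norm_nonneg (((T i) x) (b i))]
  have hFlow : ∀ i, 1 - ε < ‖F i‖ := by
    intro i
    calc 1 - ε < F i (a i) := by rw [hFapp]; exact hab i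
      _ ≤ ‖F i (a i)‖ := Real.le_norm_self _
      _ ≤ ‖F i‖ * ‖a i‖ := (F i).le_opNorm _
      _ ≤ ‖F i‖ * 1 := by gcongr; exact ha i
      _ = ‖F i‖ := mul_one _
  have hFpos : ∀ i, 0 < ‖F i‖ := fun i => lt_trans (by linarith) (hFlow i)
  -- the CCS in X
  have hsliceX : ∀ i, IsSlice {w : X | ‖w‖ ≤ 1 ∧ 1 - ε < (‖F i‖⁻¹ • F i) w} := fun i =>
    ⟨‖F i‖⁻¹ • F i, ε,
      by rw [norm_smul (‖F i‖⁻¹) (F i), norm_inv, norm_norm, inv_mul_cancel₀ (hFpos i).ne'], hε0, rfl⟩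
  obtain ⟨x0, ⟨xs, hxs, hx0⟩, hx0s⟩ := hX _ ⟨n, lam, _, hn, hlam, hsum, hsliceX, rfl⟩
  rw [mem_sphere_zero_iff_norm] at hx0s
  have hxsnorm : ∀ i, ‖xs i‖ ≤ 1 := fun i => (hxs i).1
  have hTxb : ∀ i, (1 - ε) * (1 - ε) < T i (xs i) (b i) := by
    intro i
    have h2 := (hxs i).2
    rw [ContinuousLinearMap.smul_apply, smul_eq_mul] at h2
    have h3 : ‖F i‖ * (1 - ε) < F i (xs i) := by
      have h4 := (mul_lt_mul_iff_right₀ (hFpos i)).2 h2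
      rwa [← mul_assoc, mul_inv_cancel₀ (hFpos i).ne', one_mul] at h4
    rw [← hFapp]
    nlinarith [hFlow i, hε1]
  -- the functionals `G i = T i (xs i)` on Y
  set G : Fin n → (Y →L[ℝ] ℝ) := fun i => T i (xs i) with hGdef
  have hGapp : ∀ i y, G i y = T i (xs i) y := fun i y => rfl
  have hG1 : ∀ i, ‖G i‖ ≤ 1 := by
    intro i
    calc ‖T i (xs i)‖ ≤ ‖T i‖ * ‖xs i‖ := (T i).le_opNorm _
      _ ≤ 1 := by rw [hT i, one_mul]; exact hxsnorm i
  have hGlow : ∀ i, (1 - ε) * (1 - ε) < ‖G i‖ := by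
    intro i
    calc (1 - ε) * (1 - ε) < G i (b i) := by rw [hGapp]; exact hTxb i
      _ ≤ ‖G i (b i)‖ := Real.le_norm_self _
      _ ≤ ‖G i‖ * ‖b i‖ := (G i).le_opNorm _
      _ ≤ ‖G i‖ * 1 := by gcongr; exact hb i
      _ = ‖G i‖ := mul_one _
  have hGpos : ∀ i, 0 < ‖G i‖ := fun i => lt_trans (by nlinarith) (hGlow i)
  -- the CCS in Y
  have hsliceY : ∀ i, IsSlice {w : Y | ‖w‖ ≤ 1 ∧ 1 - ε < (‖G i‖⁻¹ • G i) w} := fun i =>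
    ⟨‖G i‖⁻¹ • G i, ε,
      by rw [norm_smul (‖G i‖⁻¹) (G i), norm_inv, norm_norm, inv_mul_cancel₀ (hGpos i).ne'], hε0, rfl⟩
  obtain ⟨y0, ⟨ys, hys, hy0⟩, hy0s⟩ := hY _ ⟨n, lam, _, hn, hlam, hsum, hsliceY, rfl⟩
  rw [mem_sphere_zero_iff_norm] at hy0s
  have hysnorm : ∀ i, ‖ys i‖ ≤ 1 := fun i => (hys i).1
  have hTxy : ∀ i, 1 - α < T i (xs i) (ys i) := by
    intro i
    have h2 := (hys i).2
    rw [ContinuousLinearMap.smul_apply, smul_eq_mul] at h2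
    have h3 : ‖G i‖ * (1 - ε) < G i (ys i) := by
      have h4 := (mul_lt_mul_iff_right₀ (hGpos i)).2 h2
      rwa [← mul_assoc, mul_inv_cancel₀ (hGpos i).ne', one_mul] at h4
    rw [← hGapp]
    nlinarith [hGlow i, hε1, hcube, mul_lt_mul_of_pos_right (hGlow i)
      (by linarith : (0:ℝ) < 1 - ε)]
  -- the candidate element
  refine ⟨fun i => xs i ⊗ₜ[ℝ] ys i, fun i => ⟨?_, ?_⟩, ?_⟩
  · calc projNorm (xs i ⊗ₜ[ℝ] ys i) ≤ ∑ j : Fin 1, ‖![xs i] j‖ * ‖![ys i] j‖ :=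
        projNorm_le ![xs i] ![ys i] (by simp)
      _ = ‖xs i‖ * ‖ys i‖ := by simp
      _ ≤ 1 := mul_le_one₀ (hxsnorm i) (norm_nonneg _) (hysnorm i)
  · rw [inducedLinearMap_tmul]; exact hTxy i
  · -- the norm of the convex combination is exactly 1
    have hrepr : ∑ i, lam i • (xs i ⊗ₜ[ℝ] ys i) = ∑ i, (lam i • xs i) ⊗ₜ[ℝ] ys i :=
      Finset.sum_congr rfl fun i _ => smul_tmul' _ _ _
    have hle : projNorm (∑ i, lam i • (xs i ⊗ₜ[ℝ] ys i)) ≤ 1 := by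
      refine le_trans (projNorm_le _ _ hrepr) ?_
      calc ∑ i, ‖lam i • xs i‖ * ‖ys i‖ ≤ ∑ i, lam i := by
            refine Finset.sum_le_sum fun i _ => ?_
            rw [norm_smul, Real.norm_eq_abs, abs_of_nonneg (hlam i).1]
            nlinarith [mul_nonneg (hlam i).1 (sub_nonneg.2 (hxsnorm i)),
              mul_nonneg (mul_nonneg (hlam i).1 (norm_nonneg (xs i)))
                (sub_nonneg.2 (hysnorm i))]
        _ = 1 := hsum
    -- lower bound via a norming functional
    have hx0ne : x0 ≠ 0 := by
      intro h; rw [h, norm_zero] at hx0s; linarith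
    have hy0ne : y0 ≠ 0 := by
      intro h; rw [h, norm_zero] at hy0s; linarith
    obtain ⟨f, hf1, hfx⟩ := exists_dual_vector ℝ x0 (norm_ne_zero_iff.2 hx0ne)
    obtain ⟨g, hg1, hgy⟩ := exists_dual_vector ℝ y0 (norm_ne_zero_iff.2 hy0ne)
    set B : X →L[ℝ] Y →L[ℝ] ℝ := f.smulRight g with hBdef
    have hBapp : ∀ u v, B u v = f u * g v := fun u v => rfl
    have hBle : ∀ u v, B u v ≤ ‖u‖ * ‖v‖ := by
      intro u v
      rw [hBapp]
      calc f u * g v ≤ |f u * g v| := le_abs_self _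
        _ = |f u| * |g v| := abs_mul _ _
        _ ≤ (‖f‖ * ‖u‖) * (‖g‖ * ‖v‖) := by
            refine mul_le_mul ?_ ?_ (abs_nonneg _) (by positivity)
            · rw [← Real.norm_eq_abs]; exact f.le_opNorm u
            · rw [← Real.norm_eq_abs]; exact g.le_opNorm v
        _ = ‖u‖ * ‖v‖ := by rw [hf1, hg1]; ring
    have hfle : ∀ i, f (xs i) ≤ 1 := fun i =>
      le_trans (Real.le_norm_self _) (le_trans (f.le_opNorm _)
        (by rw [hf1, one_mul]; exact hxsnorm i))
    have hgle : ∀ i, g (ys i) ≤ 1 := fun i =>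
      le_trans (Real.le_norm_self _) (le_trans (g.le_opNorm _)
        (by rw [hg1, one_mul]; exact hysnorm i))
    have hfs : ∑ i, lam i * f (xs i) = 1 := by
      have hfx1 : f x0 = 1 := by rw [hfx, hx0s]; norm_num
      rw [← hfx1, hx0, map_sum]
      exact Finset.sum_congr rfl fun i _ => by rw [map_smul, smul_eq_mul]
    have hgs : ∑ i, lam i * g (ys i) = 1 := by
      have hgy1 : g y0 = 1 := by rw [hgy, hy0s]; norm_num
      rw [← hgy1, hy0, map_sum]
      exact Finset.sum_congr rfl fun i _ => by rw [map_smul, smul_eq_mul]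
    have hval : inducedLinearMap B (∑ i, lam i • (xs i ⊗ₜ[ℝ] ys i))
        = ∑ i, lam i * (f (xs i) * g (ys i)) := by
      rw [map_sum]
      refine Finset.sum_congr rfl fun i _ => ?_
      rw [map_smul, smul_eq_mul, inducedLinearMap_tmul, hBapp]
    have hge : 1 ≤ projNorm (∑ i, lam i • (xs i ⊗ₜ[ℝ] ys i)) := by
      refine le_trans ?_ (le_projNorm B hBle _)
      rw [hval]
      have hexp : ∑ i, lam i * (f (xs i) + g (ys i) - 1)
          = (∑ i, lam i * f (xs i)) + (∑ i, lam i * g (ys i)) - ∑ i, lam i := by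
        rw [← Finset.sum_add_distrib, ← Finset.sum_sub_distrib]
        exact Finset.sum_congr rfl fun i _ => by ring
      calc (1:ℝ) = ∑ i, lam i * (f (xs i) + g (ys i) - 1) := by
            rw [hexp, hfs, hgs, hsum]; norm_num
        _ ≤ ∑ i, lam i * (f (xs i) * g (ys i)) :=
            Finset.sum_le_sum fun i _ =>
              mul_le_mul_of_nonneg_left (by nlinarith [hfle i, hgle i]) (hlam i).1
    linarith
end
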